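/- In the quotient semiring N[x]/(x = 1 + x^2), the identity x + x^4 = 1 + x^3 holds. -/

import Mathlib

open Polynomial

/-- In `ℕ[x]/(x = 1 + x²)`: `x + x⁴ = 1 + x³`. -/
theorem stmt_1 :
    (ringConGen (fun p q : Polynomial ℕ => p = X ∧ q = 1 + X ^ 2))
      (X + X ^ 4) (1 + X ^ 3) := by
  have h : (ringConGen (fun p q : Polynomial ℕ => p = X ∧ q = 1 + X ^ 2))
      X (1 + X ^ 2) := RingConGen.Rel.of _ _ ⟨rfl, rfl⟩
  have step1 : (ringConGen (fun p q : Polynomial ℕ => p = X ∧ q = 1 + X ^ 2))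
      (X + X ^ 4) (1 + X ^ 2 + X ^ 4) := by
    have := h.add (RingConGen.Rel.refl (X ^ 4 : Polynomial ℕ))
    change RingConGen.Rel _ _ _
    convert this using 2
  have step2 : (ringConGen (fun p q : Polynomial ℕ => p = X ∧ q = 1 + X ^ 2))
      (1 + X ^ 3) (1 + X ^ 2 + X ^ 4) := by
    have := (RingConGen.Rel.refl (1 : Polynomial ℕ)).add
      (h.mul (RingConGen.Rel.refl (X ^ 2 : Polynomial ℕ)))
    change RingConGen.Rel _ _ _
    convert this using 1 <;> ring
  exact step1.trans step2.symm
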